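/- For every integer t ≥ 1, the number of 3×3 matrices of positive integers (entries not required to be distinct) in which the three row sums, the three column sums, the main-diagonal sum x₁₁+x₂₂+x₃₃, and the antidiagonal sum x₁₃+x₂₂+x₃₁ are all equal to t, is (2t²−6t+9)/9 if t is divisible by 3, and 0 otherwise. -/

import Mathlib

/-- `WeakMa t` = number of weak 3×3 magic squares (entries not required to be
distinct) with positive entries and magic sum t. -/
noncomputable def WeakMa (t : ℕ) : ℕ :=
  {x : Matrix (Fin 3) (Fin 3) ℤ |
    (∀ i, ∑ j, x i j = (t : ℤ)) ∧ (∀ j, ∑ i, x i j = (t : ℤ)) ∧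
    x 0 0 + x 1 1 + x 2 2 = (t : ℤ) ∧ x 0 2 + x 1 1 + x 2 0 = (t : ℤ) ∧
    ∀ i j, 0 < x i j}.ncard

def gMat (c a b : ℤ) : Matrix (Fin 3) (Fin 3) ℤ :=
  !![c+a, c-a-b, c+b; c-a+b, c, c+a-b; c-b, c+a+b, c-a]

noncomputable def dia (n : ℕ) : Finset (ℤ × ℤ) :=
  (Finset.Icc (-(n:ℤ)) (n:ℤ)).biUnion fun a =>
    (Finset.Icc ((a.natAbs : ℤ) - n) ((n:ℤ) - a.natAbs)).image fun b => (a, b)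

lemma mem_dia {n : ℕ} {p : ℤ × ℤ} :
    p ∈ dia n ↔ p.1.natAbs + p.2.natAbs ≤ n := by
  simp only [dia, Finset.mem_biUnion, Finset.mem_image, Finset.mem_Icc]
  constructor
  · rintro ⟨a, ⟨ha1, ha2⟩, b, ⟨hb1, hb2⟩, rfl⟩
    simp only
    omega
  · intro h
    exact ⟨p.1, ⟨by omega, by omega⟩, p.2, ⟨by omega, by omega⟩, rfl⟩

lemma sum_lem (n : ℕ) :
    ∑ a ∈ Finset.Icc (-(n:ℤ)) (n:ℤ), (2*(n:ℤ) - 2*a.natAbs + 1).toNat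
      = 2*n^2 + 2*n + 1 := by
  induction n with
  | zero => simp
  | succ n ih =>
    have hins : Finset.Icc (-((n+1:ℕ):ℤ)) ((n+1:ℕ):ℤ) =
        insert (-((n:ℤ)+1)) (insert ((n:ℤ)+1) (Finset.Icc (-(n:ℤ)) (n:ℤ))) := by
      ext x
      simp only [Finset.mem_Icc, Finset.mem_insert]
      push_cast
      omega
    rw [hins, Finset.sum_insert, Finset.sum_insert]
    · have hcong : ∑ a ∈ Finset.Icc (-(n:ℤ)) (n:ℤ),
          (2*((n+1:ℕ):ℤ) - 2*a.natAbs + 1).toNat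
          = ∑ a ∈ Finset.Icc (-(n:ℤ)) (n:ℤ),
            ((2*(n:ℤ) - 2*a.natAbs + 1).toNat + 2) := by
        apply Finset.sum_congr rfl
        intro a ha
        simp only [Finset.mem_Icc] at ha
        omega
      rw [hcong, Finset.sum_add_distrib, ih, Finset.sum_const]
      have hcard : (Finset.Icc (-(n:ℤ)) (n:ℤ)).card = 2*n+1 := by
        rw [Int.card_Icc]; omega
      rw [hcard]
      have hsq : (n+1)^2 = n^2 + 2*n + 1 := by ring
      have e1 : ((n:ℤ)+1).natAbs = n+1 := by omega
      have e2 : (-((n:ℤ)+1)).natAbs = n+1 := by omega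
      simp only [smul_eq_mul, e1, e2]
      omega
    · simp only [Finset.mem_Icc]; omega
    · simp only [Finset.mem_insert, Finset.mem_Icc]; omega

lemma dia_card (n : ℕ) : (dia n).card = 2*n^2 + 2*n + 1 := by
  rw [dia, Finset.card_biUnion]
  · have : ∀ a ∈ Finset.Icc (-(n:ℤ)) (n:ℤ),
        ((Finset.Icc ((a.natAbs : ℤ) - n) ((n:ℤ) - a.natAbs)).image
          fun b => (a, b)).card = (2*(n:ℤ) - 2*a.natAbs + 1).toNat := by
      intro a _
      rw [Finset.card_image_of_injective _ (fun b b' h => (Prod.mk.injEq _ _ _ _ ▸ h).2),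
        Int.card_Icc]
      congr 1
      ring
    rw [Finset.sum_congr rfl this, sum_lem]
  · intro a _ a' _ haa'
    simp only [Finset.disjoint_left, Finset.mem_image]
    rintro p ⟨b, _, rfl⟩ ⟨b', _, h⟩
    exact haa' (Prod.mk.injEq _ _ _ _ ▸ h.symm).1

theorem weak_magic_affine_count (t : ℕ) (ht : 1 ≤ t) :
    (3 ∣ t → 9 * (WeakMa t : ℤ) = 2*(t : ℤ)^2 - 6*(t : ℤ) + 9) ∧
    (¬ (3 ∣ t) → WeakMa t = 0) := by
  constructor
  · rintro ⟨c, rfl⟩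
    have hc : 1 ≤ c := by omega
    set n : ℕ := c - 1 with hn
    have hnc : (n:ℤ) = (c:ℤ) - 1 := by omega
    have hset : {x : Matrix (Fin 3) (Fin 3) ℤ |
        (∀ i, ∑ j, x i j = ((3*c : ℕ) : ℤ)) ∧ (∀ j, ∑ i, x i j = ((3*c : ℕ) : ℤ)) ∧
        x 0 0 + x 1 1 + x 2 2 = ((3*c : ℕ) : ℤ) ∧ x 0 2 + x 1 1 + x 2 0 = ((3*c : ℕ) : ℤ) ∧
        ∀ i j, 0 < x i j} =
        ↑((dia n).image fun p => gMat (c:ℤ) p.1 p.2) := by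
      ext x
      simp only [Set.mem_setOf_eq, Finset.coe_image, Set.mem_image, Finset.mem_coe]
      constructor
      · rintro ⟨hr, hcol, hd, ha, hp⟩
        have hr0 := hr 0; have hr1 := hr 1; have hr2 := hr 2
        have hc0 := hcol 0; have hc1 := hcol 1; have hc2 := hcol 2
        simp only [Fin.sum_univ_three] at hr0 hr1 hr2 hc0 hc1 hc2
        have h00 := hp 0 0; have h01 := hp 0 1; have h02 := hp 0 2
        have h10 := hp 1 0; have h11 := hp 1 1; have h12 := hp 1 2
        have h20 := hp 2 0; have h21 := hp 2 1; have h22 := hp 2 2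
        have hcast : ((3*c:ℕ):ℤ) = 3*(c:ℤ) := by push_cast; ring
        rw [hcast] at hr0 hr1 hr2 hc0 hc1 hc2 hd ha
        refine ⟨(x 0 0 - c, x 0 2 - c), mem_dia.mpr ?_, ?_⟩
        · simp only
          omega
        · ext i j
          fin_cases i <;> fin_cases j <;>
            simp [gMat, Matrix.cons_val_zero, Matrix.cons_val_one, Matrix.head_cons] <;>
            omega
      · rintro ⟨⟨a, b⟩, hpmem, rfl⟩
        rw [mem_dia] at hpmem
        simp only at hpmem
        have hcast : ((3*c:ℕ):ℤ) = 3*(c:ℤ) := by push_cast; ring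
        refine ⟨?_, ?_, ?_, ?_, ?_⟩
        · intro i; fin_cases i <;>
            simp [gMat, Fin.sum_univ_three, hcast] <;> omega
        · intro j; fin_cases j <;>
            simp [gMat, Fin.sum_univ_three, hcast] <;> omega
        · simp [gMat, hcast] <;> omega
        · simp [gMat, hcast] <;> omega
        · intro i j; fin_cases i <;> fin_cases j <;>
            simp [gMat] <;> omega
    have hcard : WeakMa (3*c) = 2*n^2 + 2*n + 1 := by
      rw [WeakMa, hset, Set.ncard_coe_finset, Finset.card_image_of_injective, dia_card]
      intro p q h
      have h1 := congrFun (congrFun h 0) 0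
      have h2 := congrFun (congrFun h 0) 2
      simp [gMat] at h1 h2
      exact Prod.ext h1 h2
    rw [hcard]
    push_cast
    rw [hnc]
    ring
  · intro h3
    have hempty : {x : Matrix (Fin 3) (Fin 3) ℤ |
        (∀ i, ∑ j, x i j = (t : ℤ)) ∧ (∀ j, ∑ i, x i j = (t : ℤ)) ∧
        x 0 0 + x 1 1 + x 2 2 = (t : ℤ) ∧ x 0 2 + x 1 1 + x 2 0 = (t : ℤ) ∧
        ∀ i j, 0 < x i j} = ∅ := by
      ext x
      simp only [Set.mem_setOf_eq, Set.mem_empty_iff_false, iff_false]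
      rintro ⟨hr, hcol, hd, ha, hp⟩
      have hr1 := hr 1
      have hc1 := hcol 1
      have hr0 := hr 0; have hr2 := hr 2
      simp only [Fin.sum_univ_three] at hr0 hr1 hr2 hc1
      have hdvd : (3:ℤ) ∣ (t:ℤ) := ⟨x 1 1, by linarith⟩
      exact h3 (by exact_mod_cast hdvd)
    rw [WeakMa, hempty, Set.ncard_empty]
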